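/- Let m be a positive integer, M = 2m, q = m+1, and k ≥ 0 an integer. Then there are exactly two expansions (c_i) of 1 in base q over the alphabet {0,...,M} such that c_1 = ⋯ = c_k = m and c_{k+1} ≠ m: namely c_{k+1} = m+1 followed by all zeros, and c_{k+1} = m-1 followed by all digits equal to 2m. Consequently, 1 has exactly countably infinitely many expansions in base m+1 over the alphabet {0,...,2m}. -/

import Mathlib

namespace S12
variable {m : ℕ}

lemma hq1 (hm : 0 < m) : (1:ℝ) < (m:ℝ) + 1 := by
  have : (1:ℝ) ≤ m := by exact_mod_cast hm
  linarith

lemma summable_geom (hm : 0 < m) :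
    Summable (fun i : ℕ => (((m:ℝ)+1)⁻¹) ^ (i+1)) := by
  have h1 := hq1 hm
  have : Summable (fun i : ℕ => (((m:ℝ)+1)⁻¹) ^ i) := by
    apply summable_geometric_of_lt_one (by positivity)
    rw [inv_lt_one_iff₀]; right; exact h1
  simpa [pow_succ, mul_comm] using this.mul_left (((m:ℝ)+1)⁻¹)

lemma summable_digits (hm : 0 < m) (c : ℕ → ℕ) (B : ℕ) (hc : ∀ i, c i ≤ B) :
    Summable (fun i : ℕ => (c i : ℝ) / ((m:ℝ)+1) ^ (i+1)) := by
  have hg : Summable (fun i : ℕ => (B:ℝ) * (((m:ℝ)+1)⁻¹) ^ (i+1)) :=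
    (summable_geom hm).mul_left _
  refine Summable.of_nonneg_of_le (fun i => by positivity) (fun i => ?_) hg
  rw [div_eq_mul_inv, ← inv_pow]
  gcongr
  exact_mod_cast hc i

lemma tsum_const (hm : 0 < m) (d : ℕ) :
    ∑' i : ℕ, (d : ℝ) / ((m:ℝ)+1) ^ (i+1) = (d:ℝ) / m := by
  have h1 := hq1 hm
  have hm' : (0:ℝ) < m := by exact_mod_cast hm
  have hg : ∑' i : ℕ, (((m:ℝ)+1)⁻¹) ^ i = (1 - ((m:ℝ)+1)⁻¹)⁻¹ :=
    tsum_geometric_of_lt_one (by positivity) (by rw [inv_lt_one_iff₀]; right; exact h1)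
  calc ∑' i : ℕ, (d:ℝ) / ((m:ℝ)+1) ^ (i+1)
      = (d:ℝ) * ((m:ℝ)+1)⁻¹ * ∑' i : ℕ, (((m:ℝ)+1)⁻¹) ^ i := by
        rw [← tsum_mul_left]; congr 1; funext i
        rw [div_eq_mul_inv, ← inv_pow]; ring
    _ = (d:ℝ) / m := by rw [hg]; field_simp; rw [add_sub_cancel_right]; field_simp

lemma sum_range_m (hm : 0 < m) (k : ℕ) :
    ∑ i ∈ Finset.range k, (m:ℝ) / ((m:ℝ)+1) ^ (i+1) = 1 - 1 / ((m:ℝ)+1) ^ k := by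
  induction k with
  | zero => simp
  | succ n ih =>
    rw [Finset.sum_range_succ, ih]
    have h0 : ((m:ℝ)+1) ^ n ≠ 0 := by positivity
    have h1 : ((m:ℝ)+1) ^ (n+1) ≠ 0 := by positivity
    field_simp
    ring


lemma tsum_shift2 (hm : 0 < m) (d : ℕ) :
    ∑' i : ℕ, (d : ℝ) / ((m:ℝ)+1) ^ (i+1+1) = (d:ℝ) / m * ((m:ℝ)+1)⁻¹ := by
  have : ∀ i : ℕ, (d : ℝ) / ((m:ℝ)+1) ^ (i+1+1)
      = ((m:ℝ)+1)⁻¹ * ((d:ℝ) / ((m:ℝ)+1) ^ (i+1)) := by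
    intro i
    rw [pow_succ, div_mul_eq_div_div, div_eq_mul_inv _ ((m:ℝ)+1), mul_comm]
  rw [tsum_congr this, tsum_mul_left, tsum_const hm]
  ring

set_option maxHeartbeats 1000000 in
lemma classify0 (hm : 0 < m) (c : ℕ → ℕ) (hc : ∀ i, c i ≤ 2*m)
    (hsum : ∑' i : ℕ, (c i : ℝ) / ((m:ℝ)+1) ^ (i+1) = 1) (h0 : c 0 ≠ m) :
    (c 0 = m + 1 ∧ ∀ i, 0 < i → c i = 0) ∨ (c 0 = m - 1 ∧ ∀ i, 0 < i → c i = 2*m) := by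
  have hm' : (0:ℝ) < m := by exact_mod_cast hm
  have hq : (0:ℝ) < (m:ℝ)+1 := by positivity
  set f : ℕ → ℝ := fun i => (c i : ℝ) / ((m:ℝ)+1) ^ (i+1) with hf
  have hs : Summable f := summable_digits hm c (2*m) hc
  have hs1 : Summable (fun i => f (i+1)) := (summable_nat_add_iff 1).mpr hs
  have hsplit := Summable.sum_add_tsum_nat_add (f := f) 1 hs
  rw [hsum] at hsplit
  simp only [Finset.sum_range_one] at hsplit
  set S : ℝ := ∑' i : ℕ, f (i+1) with hS
  have hS0 : 0 ≤ S := tsum_nonneg (fun i => by positivity)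
  have hbig' : Summable (fun i : ℕ => ((2*m:ℕ) : ℝ) / ((m:ℝ)+1) ^ (i+1+1)) :=
    (summable_nat_add_iff 1).mpr (summable_digits hm (fun _ => 2*m) (2*m) (fun _ => le_refl _))
  have hbigsum : ∑' i : ℕ, ((2*m:ℕ) : ℝ) / ((m:ℝ)+1) ^ (i+1+1)
      = 2 * ((m:ℝ)+1)⁻¹ := by
    rw [tsum_shift2 hm (2*m)]
    push_cast
    field_simp
  have hSle : S ≤ 2 * ((m:ℝ)+1)⁻¹ := by
    rw [hS, ← hbigsum]
    refine Summable.tsum_le_tsum (fun i => ?_) hs1 hbig'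
    simp only [hf]
    gcongr
    exact_mod_cast hc (i+1)
  -- f 0 = c 0 / (m+1)
  have hf0 : f 0 = (c 0 : ℝ) / ((m:ℝ)+1) := by simp [hf]
  rw [hf0] at hsplit
  -- bounds on c 0
  have hub : (c 0 : ℝ) ≤ (m:ℝ) + 1 := by
    have h1 : (c 0 : ℝ) / ((m:ℝ)+1) ≤ 1 := by linarith
    exact (div_le_one hq).mp h1
  have hlb : (m:ℝ) - 1 ≤ (c 0 : ℝ) := by
    have h1 : 1 - 2 * ((m:ℝ)+1)⁻¹ ≤ (c 0 : ℝ) / ((m:ℝ)+1) := by linarith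
    have := mul_le_mul_of_nonneg_right h1 (le_of_lt hq)
    rw [div_mul_cancel₀ _ (ne_of_gt hq)] at this
    calc (m:ℝ) - 1 = (1 - 2 * ((m:ℝ)+1)⁻¹) * ((m:ℝ)+1) := by field_simp; ring
    _ ≤ (c 0 : ℝ) := this
  have hubn : c 0 ≤ m + 1 := by exact_mod_cast hub
  have hlbn : m - 1 ≤ c 0 := by
    rcases Nat.eq_or_lt_of_le hm with h | h
    · omega
    · have : (m:ℝ) - 1 = ((m - 1 : ℕ) : ℝ) := by
        rw [Nat.cast_sub hm]; simp
      rw [this] at hlb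
      exact_mod_cast hlb
  have hcase : c 0 = m + 1 ∨ c 0 = m - 1 := by omega
  rcases hcase with h | h
  · left
    refine ⟨h, fun i hi => ?_⟩
    have hc0 : (c 0 : ℝ) = (m:ℝ) + 1 := by rw [h]; push_cast; ring
    have hSz : S = 0 := by
      rw [hc0] at hsplit
      have : ((m:ℝ)+1) / ((m:ℝ)+1) = 1 := by field_simp
      linarith [this ▸ hsplit]
    -- each term of S is zero
    obtain ⟨j, rfl⟩ : ∃ j, i = j + 1 := ⟨i - 1, by omega⟩
    have hterm : f (j+1) ≤ S := Summable.le_tsum hs1 j (fun j' _ => by positivity)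
    have hterm0 : 0 ≤ f (j+1) := by positivity
    have h2 : f (j+1) = 0 := le_antisymm (by linarith) hterm0
    have hp : (0:ℝ) < ((m:ℝ)+1) ^ (j+1+1) := by positivity
    simp only [hf] at h2; field_simp at h2
    exact_mod_cast h2
  · right
    refine ⟨h, fun i hi => ?_⟩
    have hc0 : (c 0 : ℝ) = (m:ℝ) - 1 := by
      rw [h, Nat.cast_sub hm]; simp
    have hSval : S = 2 * ((m:ℝ)+1)⁻¹ := by
      rw [hc0] at hsplit
      have hq' : ((m:ℝ)+1) ≠ 0 := ne_of_gt hq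
      have : ((m:ℝ) - 1) / ((m:ℝ)+1) = 1 - 2 * ((m:ℝ)+1)⁻¹ := by field_simp; ring
      linarith [this ▸ hsplit]
    -- difference series is zero
    set g : ℕ → ℝ := fun i => ((2*m:ℕ) : ℝ) / ((m:ℝ)+1) ^ (i+1+1) - f (i+1) with hg
    have hgs : Summable g := hbig'.sub hs1
    have hgsum : ∑' i, g i = 0 := by
      rw [hg, Summable.tsum_sub hbig' hs1, hbigsum, ← hS, hSval]
      ring
    obtain ⟨j, rfl⟩ : ∃ j, i = j + 1 := ⟨i - 1, by omega⟩
    have hgnn : ∀ i, 0 ≤ g i := by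
      intro i
      simp only [hg, hf, sub_nonneg]
      gcongr
      exact_mod_cast hc (i+1)
    have hterm : g j ≤ 0 := hgsum ▸ Summable.le_tsum hgs j (fun j' _ => hgnn j')
    have : g j = 0 := le_antisymm hterm (hgnn j)
    simp only [hg, hf, sub_eq_zero] at this
    have hp : ((m:ℝ)+1) ^ (j+1+1) ≠ 0 := by positivity
    field_simp at this
    exact_mod_cast this.symm


def af (m k : ℕ) : ℕ → ℕ := fun i => if i < k then m else if i = k then m + 1 else 0
def bf (m k : ℕ) : ℕ → ℕ := fun i => if i < k then m else if i = k then m - 1 else 2 * m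

lemma af_le (hm : 0 < m) (k i : ℕ) : af m k i ≤ 2*m := by
  unfold af; split_ifs <;> omega

lemma bf_le (hm : 0 < m) (k i : ℕ) : bf m k i ≤ 2*m := by
  unfold bf; split_ifs <;> omega

lemma pow_split (k i : ℕ) (d : ℕ) :
    (d : ℝ) / ((m:ℝ)+1) ^ (i + k + 1) = (((m:ℝ)+1) ^ k)⁻¹ * ((d:ℝ) / ((m:ℝ)+1) ^ (i+1)) := by
  have : ((m:ℝ)+1) ^ (i + k + 1) = ((m:ℝ)+1) ^ k * ((m:ℝ)+1) ^ (i+1) := by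
    rw [← pow_add]; ring_nf
  rw [this, div_mul_eq_div_div_swap, div_eq_mul_inv _ (((m:ℝ)+1)^k), mul_comm]

lemma classify (hm : 0 < m) (c : ℕ → ℕ) (hc : ∀ i, c i ≤ 2*m)
    (hsum : ∑' i : ℕ, (c i : ℝ) / ((m:ℝ)+1) ^ (i+1) = 1) (k : ℕ)
    (hk : ∀ i < k, c i = m) (hck : c k ≠ m) :
    c = af m k ∨ c = bf m k := by
  have hq : (0:ℝ) < (m:ℝ)+1 := by positivity
  have hqk : (0:ℝ) < ((m:ℝ)+1) ^ k := by positivity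
  set f : ℕ → ℝ := fun i => (c i : ℝ) / ((m:ℝ)+1) ^ (i+1) with hf
  have hs : Summable f := summable_digits hm c (2*m) hc
  have hsplit := Summable.sum_add_tsum_nat_add (f := f) k hs
  rw [hsum] at hsplit
  have hsum_range : ∑ i ∈ Finset.range k, f i = 1 - 1 / ((m:ℝ)+1) ^ k := by
    rw [← sum_range_m hm k]
    apply Finset.sum_congr rfl
    intro i hi
    simp only [hf, hk i (Finset.mem_range.mp hi)]
  set d : ℕ → ℕ := fun i => c (i + k) with hd
  have hdsum : ∑' i : ℕ, (d i : ℝ) / ((m:ℝ)+1) ^ (i+1) = 1 := by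
    have h1 : ∑' i : ℕ, f (i + k) = 1 / ((m:ℝ)+1) ^ k := by
      rw [hsum_range] at hsplit; linarith
    have h2 : ∀ i : ℕ, f (i + k) = (((m:ℝ)+1) ^ k)⁻¹ * ((d i : ℝ) / ((m:ℝ)+1) ^ (i+1)) := by
      intro i
      simp only [hf, hd]
      exact pow_split k i (c (i+k))
    rw [tsum_congr h2, tsum_mul_left] at h1
    have hne : (((m:ℝ)+1) ^ k)⁻¹ ≠ 0 := by positivity
    field_simp at h1
    exact h1
  have hd0 : d 0 ≠ m := by simpa [hd] using hck
  have hcd : ∀ i, d i ≤ 2*m := fun i => hc _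
  rcases classify0 hm d hcd hdsum hd0 with ⟨h1, h2⟩ | ⟨h1, h2⟩
  · left
    funext i
    unfold af
    rcases lt_trichotomy i k with h | h | h
    · rw [if_pos h]; exact hk i h
    · subst h; rw [if_neg (lt_irrefl i), if_pos rfl]; simpa [hd] using h1
    · rw [if_neg (by omega), if_neg (by omega)]
      have := h2 (i - k) (by omega)
      simpa [hd, Nat.sub_add_cancel h.le] using this
  · right
    funext i
    unfold bf
    rcases lt_trichotomy i k with h | h | h
    · rw [if_pos h]; exact hk i h
    · subst h; rw [if_neg (lt_irrefl i), if_pos rfl]; simpa [hd] using h1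
    · rw [if_neg (by omega), if_neg (by omega)]
      have := h2 (i - k) (by omega)
      simpa [hd, Nat.sub_add_cancel h.le] using this

lemma tsum_af (hm : 0 < m) (k : ℕ) :
    ∑' i : ℕ, (af m k i : ℝ) / ((m:ℝ)+1) ^ (i+1) = 1 := by
  have hq : (0:ℝ) < (m:ℝ)+1 := by positivity
  rw [tsum_eq_sum (s := Finset.range (k+1)) (by
    intro b hb
    have : ¬ b < k ∧ b ≠ k := by
      simp only [Finset.mem_range] at hb; omega
    simp [af, this.1, this.2])]
  rw [Finset.sum_range_succ]
  have h1 : ∑ i ∈ Finset.range k, (af m k i : ℝ) / ((m:ℝ)+1) ^ (i+1)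
      = 1 - 1 / ((m:ℝ)+1) ^ k := by
    rw [← sum_range_m hm k]
    apply Finset.sum_congr rfl
    intro i hi
    simp [af, Finset.mem_range.mp hi]
  rw [h1]
  simp only [af, lt_irrefl, if_neg, if_pos, reduceIte]
  push_cast
  have hk0 : ((m:ℝ)+1) ^ k ≠ 0 := by positivity
  have hk1 : ((m:ℝ)+1) ^ (k+1) ≠ 0 := by positivity
  field_simp
  ring

lemma tsum_bf (hm : 0 < m) (k : ℕ) :
    ∑' i : ℕ, (bf m k i : ℝ) / ((m:ℝ)+1) ^ (i+1) = 1 := by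
  have hq : (0:ℝ) < (m:ℝ)+1 := by positivity
  have hm' : (0:ℝ) < m := by exact_mod_cast hm
  set f : ℕ → ℝ := fun i => (bf m k i : ℝ) / ((m:ℝ)+1) ^ (i+1) with hf
  have hs : Summable f := summable_digits hm _ (2*m) (bf_le hm k)
  have hsplit := (Summable.sum_add_tsum_nat_add (f := f) (k+1) hs).symm
  have htail : ∑' i : ℕ, f (i + (k+1)) = 2 / ((m:ℝ)+1) ^ (k+1) := by
    have h2 : ∀ i : ℕ, f (i + (k+1)) =
        (((m:ℝ)+1) ^ (k+1))⁻¹ * (((2*m:ℕ) : ℝ) / ((m:ℝ)+1) ^ (i+1)) := by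
      intro i
      have hbv : bf m k (i + (k+1)) = 2*m := by
        simp only [bf]; rw [if_neg (by omega), if_neg (by omega)]
      simp only [hf, hbv]
      exact pow_split (k+1) i (2*m)
    rw [tsum_congr h2, tsum_mul_left, tsum_const hm]
    push_cast
    field_simp
  have hhead : ∑ i ∈ Finset.range (k+1), f i
      = 1 - 1 / ((m:ℝ)+1) ^ k + ((m:ℝ) - 1) / ((m:ℝ)+1) ^ (k+1) := by
    rw [Finset.sum_range_succ]
    have h1 : ∑ i ∈ Finset.range k, f i = 1 - 1 / ((m:ℝ)+1) ^ k := by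
      rw [← sum_range_m hm k]
      apply Finset.sum_congr rfl
      intro i hi
      simp [hf, bf, Finset.mem_range.mp hi]
    rw [h1]
    have hfk : f k = ((m:ℝ) - 1) / ((m:ℝ)+1) ^ (k+1) := by
      simp only [hf, bf, lt_irrefl, if_neg, if_pos, reduceIte]
      rw [Nat.cast_sub hm]
      norm_num
    rw [hfk]
  rw [hsplit, hhead, htail]
  have hk0 : ((m:ℝ)+1) ^ k ≠ 0 := by positivity
  have hk1 : ((m:ℝ)+1) ^ (k+1) ≠ 0 := by positivity
  field_simp
  ring

end S12

open S12 in
theorem stmt12 (m : ℕ) (hm : 0 < m) (M : ℕ) (hM : M = 2 * m)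
    (q : ℝ) (hq : q = (m : ℝ) + 1) (k : ℕ) :
    {c : ℕ → ℕ | (∀ i, c i ≤ M) ∧ (∑' i : ℕ, (c i : ℝ) / q ^ (i + 1)) = 1 ∧
        (∀ i < k, c i = m) ∧ c k ≠ m} =
      {fun i => if i < k then m else if i = k then m + 1 else 0,
       fun i => if i < k then m else if i = k then m - 1 else 2 * m} ∧
    Cardinal.mk {c : ℕ → ℕ // (∀ i, c i ≤ M) ∧ (∑' i : ℕ, (c i : ℝ) / q ^ (i + 1)) = 1} =
      Cardinal.aleph0 := by
  subst hM hq
  constructor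
  · ext c
    simp only [Set.mem_setOf_eq, Set.mem_insert_iff, Set.mem_singleton_iff]
    constructor
    · rintro ⟨hc, hsum, hk, hck⟩
      rcases classify hm c hc hsum k hk hck with h | h
      · left; exact h
      · right; exact h
    · rintro (rfl | rfl)
      · refine ⟨fun i => af_le hm k i, tsum_af hm k, fun i hi => ?_, ?_⟩
        · simp [hi]
        · simp only [lt_irrefl, if_neg, reduceIte]; omega
      · refine ⟨fun i => bf_le hm k i, tsum_bf hm k, fun i hi => ?_, ?_⟩
        · simp [hi]
        · simp only [lt_irrefl, if_neg, reduceIte]; omega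
  · have hcnt : ({c : ℕ → ℕ | (∀ i, c i ≤ 2*m) ∧
        (∑' i : ℕ, (c i : ℝ) / ((m:ℝ)+1) ^ (i + 1)) = 1} : Set (ℕ → ℕ)).Countable := by
      have hsub : {c : ℕ → ℕ | (∀ i, c i ≤ 2*m) ∧
          (∑' i : ℕ, (c i : ℝ) / ((m:ℝ)+1) ^ (i + 1)) = 1} ⊆
          insert (fun _ => m) (⋃ k', ({af m k', bf m k'} : Set (ℕ → ℕ))) := by
        rintro c ⟨hc, hsum⟩
        by_cases h : ∀ i, c i = m
        · left; funext i; exact h i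
        · right
          push_neg at h
          have hex : ∃ n, c n ≠ m := h
          have hck : c (Nat.find hex) ≠ m := Nat.find_spec hex
          have hk : ∀ i < Nat.find hex, c i = m := by
            intro i hi
            by_contra hne
            exact absurd hi (not_lt.mpr (Nat.find_le hne))
          rcases classify hm c hc hsum (Nat.find hex) hk hck with h' | h'
          · exact Set.mem_iUnion.mpr ⟨Nat.find hex, Set.mem_insert_iff.mpr (Or.inl h')⟩
          · exact Set.mem_iUnion.mpr ⟨Nat.find hex,
              Set.mem_insert_iff.mpr (Or.inr (Set.mem_singleton_iff.mpr h'))⟩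
      exact Set.Countable.mono hsub
        ((Set.countable_iUnion (fun k' =>
          ((Set.finite_singleton _).insert _).countable)).insert _)
    have hle : Cardinal.mk {c : ℕ → ℕ // (∀ i, c i ≤ 2*m) ∧
        (∑' i : ℕ, (c i : ℝ) / ((m:ℝ)+1) ^ (i + 1)) = 1} ≤ Cardinal.aleph0 :=
      Cardinal.mk_le_aleph0_iff.mpr (Set.countable_coe_iff.mpr hcnt)
    have hinf : Infinite {c : ℕ → ℕ // (∀ i, c i ≤ 2*m) ∧
        (∑' i : ℕ, (c i : ℝ) / ((m:ℝ)+1) ^ (i + 1)) = 1} := by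
      refine Infinite.of_injective
        (fun k' => ⟨af m k', fun i => af_le hm k' i, tsum_af hm k'⟩) ?_
      intro x y hxy
      have hxy' : af m x = af m y := congrArg Subtype.val hxy
      by_contra hne
      rcases Nat.lt_or_ge x y with h | h
      · have := congrFun hxy' x
        simp [af, h] at this
      · have h' : y < x := by omega
        have := congrFun hxy' y
        simp [af, h'] at this
    exact le_antisymm hle (Cardinal.infinite_iff.mp hinf)
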